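/- (Systematic property of C_{G_4}) Let n ≥ 5 be prime. Then the restriction map sending a labeling L ∈ C_{G_4} to its values on the information edges {(k,ℓ) : k,ℓ ∈ [n−2]} is a bijection from C_{G_4} onto F_2^{(n−2)²}; that is, every assignment of F_2-values to the edges among the first n−2 nodes extends to exactly one labeling in C_{G_4}. -/

import Mathlib

open Finset

/-- The code `C_{G_4}`: labelings `L : [n]×[n] → F_2` of the complete directed graph with
self-loops such that (a) for `h ∈ [n-2]` the sum of `L` over the neighborhood-edge set
`S↓_h = {down edge of {h,ℓ} : ℓ ∈ [n-1]}` is `0`; (b) for `m ∈ [n]` the sum over the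
diagonal-edge set `D↓_m = {down edge of {k,ℓ} : k,ℓ ∈ [n]\{n-2}, ⟨k+ℓ⟩_n = m} ∪ {(n-1,n-2)}`
is `0`; (c) for `h ∈ [n-2]` the sum over `S↑_h = {up edge of {h,ℓ} : ℓ ∈ [n]\{n-2}}` is `0`;
and (d) for `m ∈ [n]` the sum over
`D↑_m = {up edge of {k,ℓ} : k,ℓ ∈ [n-1], ⟨k+ℓ⟩_n = m} ∪ {(n-2,n-1)}` is `0`.
Each edge in a set is counted once; downward edges are the ordered pairs `(k,ℓ)` with
`ℓ ≤ k` and upward edges those with `k ≤ ℓ`. -/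
def CG4 (n : ℕ) (hn : 5 ≤ n) : Set (Fin n → Fin n → ZMod 2) :=
  {L |
    (∀ h : Fin n, (h : ℕ) < n - 2 →
      ∑ ℓ ∈ univ.filter (fun ℓ : Fin n => (ℓ : ℕ) < n - 1),
        L (max h ℓ) (min h ℓ) = 0) ∧
    (∀ m : ℕ, m < n →
      (∑ p ∈ univ.filter (fun p : Fin n × Fin n =>
          (p.2 : ℕ) ≤ (p.1 : ℕ) ∧ (p.1 : ℕ) ≠ n - 2 ∧ (p.2 : ℕ) ≠ n - 2 ∧
            ((p.1 : ℕ) + (p.2 : ℕ)) % n = m),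
          L p.1 p.2) + L ⟨n - 1, by omega⟩ ⟨n - 2, by omega⟩ = 0) ∧
    (∀ h : Fin n, (h : ℕ) < n - 2 →
      ∑ ℓ ∈ univ.filter (fun ℓ : Fin n => (ℓ : ℕ) ≠ n - 2),
        L (min h ℓ) (max h ℓ) = 0) ∧
    (∀ m : ℕ, m < n →
      (∑ p ∈ univ.filter (fun p : Fin n × Fin n =>
          (p.1 : ℕ) ≤ (p.2 : ℕ) ∧ (p.1 : ℕ) < n - 1 ∧ (p.2 : ℕ) < n - 1 ∧
            ((p.1 : ℕ) + (p.2 : ℕ)) % n = m),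
          L p.1 p.2) + L ⟨n - 2, by omega⟩ ⟨n - 1, by omega⟩ = 0)}

lemma CG4_mod_shift {n a x m : ℕ} (ha : a ≤ n) (hx : x < n)
    (h : (n - a + x) % n = m) : x = (m + a) % n := by
  rcases lt_or_ge x a with h1 | h1
  · rw [Nat.mod_eq_of_lt (by omega)] at h
    subst h
    rw [show n - a + x + a = n + x by omega, Nat.add_mod_left, Nat.mod_eq_of_lt hx]
  · rw [show n - a + x = n + (x - a) by omega, Nat.add_mod_left,
      Nat.mod_eq_of_lt (by omega)] at h
    rw [Nat.mod_eq_of_lt (by omega)]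
    omega



lemma CG4_sub {n : ℕ} {hn : 5 ≤ n} {L L' : Fin n → Fin n → ZMod 2}
    (hL : L ∈ CG4 n hn) (hL' : L' ∈ CG4 n hn) : L - L' ∈ CG4 n hn := by
  obtain ⟨a1, b1, c1, d1⟩ := hL
  obtain ⟨a2, b2, c2, d2⟩ := hL'
  refine ⟨fun h hh => ?_, fun m hm => ?_, fun h hh => ?_, fun m hm => ?_⟩
  · simp only [Pi.sub_apply, Finset.sum_sub_distrib]
    rw [a1 h hh, a2 h hh, sub_zero]
  · simp only [Pi.sub_apply, Finset.sum_sub_distrib]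
    linear_combination b1 m hm - b2 m hm
  · simp only [Pi.sub_apply, Finset.sum_sub_distrib]
    rw [c1 h hh, c2 h hh, sub_zero]
  · simp only [Pi.sub_apply, Finset.sum_sub_distrib]
    linear_combination d1 m hm - d2 m hm

/-- The parity-check map whose kernel is `CG4`. -/
def CG4Phi (n : ℕ) (hn : 5 ≤ n) :
    (Fin n → Fin n → ZMod 2) →ₗ[ZMod 2]
      ((Fin (n - 2) ⊕ Fin n) ⊕ (Fin (n - 2) ⊕ Fin n) → ZMod 2) where
  toFun L := fun i =>
    match i with
    | .inl (.inl h) =>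
        ∑ ℓ ∈ univ.filter (fun ℓ : Fin n => (ℓ : ℕ) < n - 1),
          L (max (Fin.castLE (Nat.sub_le n 2) h) ℓ) (min (Fin.castLE (Nat.sub_le n 2) h) ℓ)
    | .inl (.inr m) =>
        (∑ p ∈ univ.filter (fun p : Fin n × Fin n =>
            (p.2 : ℕ) ≤ (p.1 : ℕ) ∧ (p.1 : ℕ) ≠ n - 2 ∧ (p.2 : ℕ) ≠ n - 2 ∧
              ((p.1 : ℕ) + (p.2 : ℕ)) % n = (m : ℕ)),
            L p.1 p.2) + L ⟨n - 1, by omega⟩ ⟨n - 2, by omega⟩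
    | .inr (.inl h) =>
        ∑ ℓ ∈ univ.filter (fun ℓ : Fin n => (ℓ : ℕ) ≠ n - 2),
          L (min (Fin.castLE (Nat.sub_le n 2) h) ℓ) (max (Fin.castLE (Nat.sub_le n 2) h) ℓ)
    | .inr (.inr m) =>
        (∑ p ∈ univ.filter (fun p : Fin n × Fin n =>
            (p.1 : ℕ) ≤ (p.2 : ℕ) ∧ (p.1 : ℕ) < n - 1 ∧ (p.2 : ℕ) < n - 1 ∧
              ((p.1 : ℕ) + (p.2 : ℕ)) % n = (m : ℕ)),
            L p.1 p.2) + L ⟨n - 2, by omega⟩ ⟨n - 1, by omega⟩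
  map_add' L L' := by
    funext i
    rcases i with (h | m) | (h | m) <;>
      simp only [Pi.add_apply, Finset.sum_add_distrib] <;> ring
  map_smul' c L := by
    funext i
    rcases i with (h | m) | (h | m) <;>
      simp only [Pi.smul_apply, smul_eq_mul, Finset.mul_sum, RingHom.id_apply,
        mul_add] <;> ring

lemma CG4_eq_ker (n : ℕ) (hn : 5 ≤ n) :
    CG4 n hn = {L | L ∈ LinearMap.ker (CG4Phi n hn)} := by
  ext L
  simp only [Set.mem_setOf_eq, LinearMap.mem_ker]
  constructor
  · rintro ⟨a, b, c, d⟩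
    funext i
    rcases i with (h | m) | (h | m)
    · exact a (Fin.castLE (by omega) h) h.isLt
    · exact b (m : ℕ) m.isLt
    · exact c (Fin.castLE (by omega) h) h.isLt
    · exact d (m : ℕ) m.isLt
  · intro hP
    refine ⟨fun h hh => ?_, fun m hm => ?_, fun h hh => ?_, fun m hm => ?_⟩
    · exact congrFun hP (.inl (.inl ⟨(h : ℕ), hh⟩))
    · exact congrFun hP (.inl (.inr ⟨m, hm⟩))
    · exact congrFun hP (.inr (.inl ⟨(h : ℕ), hh⟩))
    · exact congrFun hP (.inr (.inr ⟨m, hm⟩))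

lemma CG4_finrank (n : ℕ) (hn : 5 ≤ n) :
    (n - 2) * (n - 2) ≤ Module.finrank (ZMod 2) (LinearMap.ker (CG4Phi n hn)) := by
  have h1 := LinearMap.finrank_range_add_finrank_ker (CG4Phi n hn)
  have h2 : Module.finrank (ZMod 2)
      (LinearMap.range (CG4Phi n hn)) ≤ (n - 2) + n + ((n - 2) + n) := by
    have := Submodule.finrank_le (LinearMap.range (CG4Phi n hn))
    simpa only [Module.finrank_pi, Fintype.card_sum, Fintype.card_fin] using this
  have h3 : Module.finrank (ZMod 2) (Fin n → Fin n → ZMod 2) = n * n := by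
    rw [Module.finrank_pi_fintype]
    simp [Module.finrank_pi]
  have h4 : (n - 2) * (n - 2) + ((n - 2) + n + ((n - 2) + n)) = n * n := by
    obtain ⟨k, rfl⟩ : ∃ k, n = k + 5 := ⟨n - 5, by omega⟩
    have e1 : k + 5 - 2 = k + 3 := by omega
    rw [e1]; ring
  omega

lemma CG4_zero_of_info_zero {n : ℕ} (hn : 5 ≤ n) {D : Fin n → Fin n → ZMod 2}
    (hD : D ∈ CG4 n hn)
    (h0 : ∀ k ℓ : Fin n, (k : ℕ) < n - 2 → (ℓ : ℕ) < n - 2 → D k ℓ = 0) :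
    D = 0 := by
  obtain ⟨ha, hb, hc, hd⟩ := hD
  -- (a) determines downward edges (n-2, h)
  have hA : ∀ h : Fin n, (h : ℕ) < n - 2 → D ⟨n - 2, by omega⟩ h = 0 := by
    intro h hh
    have key : ∑ ℓ ∈ univ.filter (fun ℓ : Fin n => (ℓ : ℕ) < n - 1),
        D (max h ℓ) (min h ℓ) = D (max h ⟨n - 2, by omega⟩) (min h ⟨n - 2, by omega⟩) := by
      apply Finset.sum_eq_single_of_mem
      · simp only [Finset.mem_filter, Finset.mem_univ, true_and]; omega
      · intro ℓ hℓ hne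
        simp only [Finset.mem_filter, Finset.mem_univ, true_and] at hℓ
        have hℓ2 : (ℓ : ℕ) ≠ n - 2 := fun hv => hne (Fin.ext hv)
        apply h0
        · rcases max_choice h ℓ with h' | h' <;> rw [h'] <;> omega
        · rcases min_choice h ℓ with h' | h' <;> rw [h'] <;> omega
    have hle : h ≤ (⟨n - 2, by omega⟩ : Fin n) := by rw [Fin.le_def]; simp; omega
    rw [max_eq_right hle, min_eq_left hle] at key
    rw [← key]; exact ha h hh
  -- (c) determines upward edges (h, n-1)
  have hC : ∀ h : Fin n, (h : ℕ) < n - 2 → D h ⟨n - 1, by omega⟩ = 0 := by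
    intro h hh
    have key : ∑ ℓ ∈ univ.filter (fun ℓ : Fin n => (ℓ : ℕ) ≠ n - 2),
        D (min h ℓ) (max h ℓ) = D (min h ⟨n - 1, by omega⟩) (max h ⟨n - 1, by omega⟩) := by
      apply Finset.sum_eq_single_of_mem
      · simp only [Finset.mem_filter, Finset.mem_univ, true_and]; omega
      · intro ℓ hℓ hne
        simp only [Finset.mem_filter, Finset.mem_univ, true_and] at hℓ
        have hℓ2 : (ℓ : ℕ) ≠ n - 1 := fun hv => hne (Fin.ext hv)
        have hℓ3 : (ℓ : ℕ) < n - 2 := by have := ℓ.isLt; omega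
        apply h0
        · rcases min_choice h ℓ with h' | h' <;> rw [h'] <;> omega
        · rcases max_choice h ℓ with h' | h' <;> rw [h'] <;> omega
    have hle : h ≤ (⟨n - 1, by omega⟩ : Fin n) := by rw [Fin.le_def]; simp; omega
    rw [max_eq_right hle, min_eq_left hle] at key
    rw [← key]; exact hc h hh
  -- (b) with m = n-3 gives D (n-1) (n-2) = 0
  have hB0 : D ⟨n - 1, by omega⟩ ⟨n - 2, by omega⟩ = 0 := by
    have hcon := hb (n - 3) (by omega)
    have hz : ∑ p ∈ univ.filter (fun p : Fin n × Fin n =>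
        (p.2 : ℕ) ≤ (p.1 : ℕ) ∧ (p.1 : ℕ) ≠ n - 2 ∧ (p.2 : ℕ) ≠ n - 2 ∧
          ((p.1 : ℕ) + (p.2 : ℕ)) % n = n - 3), D p.1 p.2 = 0 := by
      apply Finset.sum_eq_zero
      intro p hp
      simp only [Finset.mem_filter, Finset.mem_univ, true_and] at hp
      obtain ⟨h1, h2, h3, h4⟩ := hp
      by_cases hp1 : (p.1 : ℕ) = n - 1
      · exfalso
        rw [hp1] at h4
        have := CG4_mod_shift (a := 1) (by omega) p.2.isLt h4
        rw [show n - 3 + 1 = n - 2 by omega, Nat.mod_eq_of_lt (by omega)] at this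
        exact h3 this
      · have := p.1.isLt
        exact h0 _ _ (by omega) (by omega)
    rw [hz, zero_add] at hcon
    exact hcon
  -- (b) determines all downward edges from n-1
  have hB : ∀ ℓ : Fin n, D ⟨n - 1, by omega⟩ ℓ = 0 := by
    intro ℓ
    by_cases hℓ : (ℓ : ℕ) = n - 2
    · rw [show ℓ = ⟨n - 2, by omega⟩ from Fin.ext hℓ]; exact hB0
    · have hm : (n - 1 + (ℓ : ℕ)) % n < n := Nat.mod_lt _ (by omega)
      have hcon := hb ((n - 1 + (ℓ : ℕ)) % n) hm
      have key : ∑ p ∈ univ.filter (fun p : Fin n × Fin n =>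
          (p.2 : ℕ) ≤ (p.1 : ℕ) ∧ (p.1 : ℕ) ≠ n - 2 ∧ (p.2 : ℕ) ≠ n - 2 ∧
            ((p.1 : ℕ) + (p.2 : ℕ)) % n = (n - 1 + (ℓ : ℕ)) % n), D p.1 p.2
          = D ⟨n - 1, by omega⟩ ℓ := by
        apply Finset.sum_eq_single_of_mem ((⟨n - 1, by omega⟩ : Fin n), ℓ)
        · simp only [Finset.mem_filter, Finset.mem_univ, true_and, and_true]
          exact ⟨by have := ℓ.isLt; omega, by omega, hℓ⟩
        · intro p hp hne
          simp only [Finset.mem_filter, Finset.mem_univ, true_and] at hp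
          obtain ⟨h1, h2, h3, h4⟩ := hp
          by_cases hp1 : (p.1 : ℕ) = n - 1
          · exfalso
            apply hne
            rw [hp1] at h4
            have h5 := CG4_mod_shift (a := 1) (by omega) p.2.isLt h4
            have h6 := CG4_mod_shift (a := 1) (by omega) ℓ.isLt rfl
            exact Prod.ext (Fin.ext (by simp; omega)) (Fin.ext (by rw [h5, ← h6]))
          · have := p.1.isLt
            exact h0 _ _ (by omega) (by omega)
      rw [key, hB0, add_zero] at hcon
      exact hcon
  -- (d) with m = n-3 gives D (n-2) (n-1) = 0
  have hD0 : D ⟨n - 2, by omega⟩ ⟨n - 1, by omega⟩ = 0 := by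
    have hcon := hd (n - 3) (by omega)
    have hz : ∑ p ∈ univ.filter (fun p : Fin n × Fin n =>
        (p.1 : ℕ) ≤ (p.2 : ℕ) ∧ (p.1 : ℕ) < n - 1 ∧ (p.2 : ℕ) < n - 1 ∧
          ((p.1 : ℕ) + (p.2 : ℕ)) % n = n - 3), D p.1 p.2 = 0 := by
      apply Finset.sum_eq_zero
      intro p hp
      simp only [Finset.mem_filter, Finset.mem_univ, true_and] at hp
      obtain ⟨h1, h2, h3, h4⟩ := hp
      by_cases hp2 : (p.2 : ℕ) = n - 2
      · exfalso
        rw [hp2, Nat.add_comm] at h4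
        have := CG4_mod_shift (a := 2) (by omega) p.1.isLt h4
        rw [show n - 3 + 2 = n - 1 by omega, Nat.mod_eq_of_lt (by omega)] at this
        omega
      · exact h0 _ _ (by omega) (by omega)
    rw [hz, zero_add] at hcon
    exact hcon
  -- (d) determines all upward edges into n-2
  have hDD : ∀ ℓ : Fin n, (ℓ : ℕ) ≤ n - 2 → D ℓ ⟨n - 2, by omega⟩ = 0 := by
    intro ℓ hℓ
    have hm : ((ℓ : ℕ) + (n - 2)) % n < n := Nat.mod_lt _ (by omega)
    have hcon := hd (((ℓ : ℕ) + (n - 2)) % n) hm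
    have key : ∑ p ∈ univ.filter (fun p : Fin n × Fin n =>
        (p.1 : ℕ) ≤ (p.2 : ℕ) ∧ (p.1 : ℕ) < n - 1 ∧ (p.2 : ℕ) < n - 1 ∧
          ((p.1 : ℕ) + (p.2 : ℕ)) % n = ((ℓ : ℕ) + (n - 2)) % n), D p.1 p.2
        = D ℓ ⟨n - 2, by omega⟩ := by
      apply Finset.sum_eq_single_of_mem (ℓ, (⟨n - 2, by omega⟩ : Fin n))
      · simp only [Finset.mem_filter, Finset.mem_univ, true_and, and_true]
        exact ⟨hℓ, by omega, by omega⟩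
      · intro p hp hne
        simp only [Finset.mem_filter, Finset.mem_univ, true_and] at hp
        obtain ⟨h1, h2, h3, h4⟩ := hp
        by_cases hp2 : (p.2 : ℕ) = n - 2
        · exfalso
          apply hne
          rw [hp2, Nat.add_comm] at h4
          have h5 := CG4_mod_shift (a := 2) (by omega) p.1.isLt h4
          have h6 := CG4_mod_shift (a := 2) (by omega) ℓ.isLt (by rw [Nat.add_comm])
          exact Prod.ext (Fin.ext (by rw [h5, ← h6])) (Fin.ext (by simp; omega))
        · exact h0 _ _ (by omega) (by omega)
    rw [key, hD0, add_zero] at hcon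
    exact hcon
  -- assemble
  funext k ℓ
  show D k ℓ = 0
  by_cases hk1 : (k : ℕ) = n - 1
  · rw [show k = ⟨n - 1, by omega⟩ from Fin.ext hk1]; exact hB ℓ
  have hk' : (k : ℕ) ≤ n - 2 := by have := k.isLt; omega
  by_cases hl1 : (ℓ : ℕ) = n - 1
  · rw [show ℓ = ⟨n - 1, by omega⟩ from Fin.ext hl1]
    by_cases hk2 : (k : ℕ) = n - 2
    · rw [show k = ⟨n - 2, by omega⟩ from Fin.ext hk2]; exact hD0
    · exact hC k (by omega)
  by_cases hl2 : (ℓ : ℕ) = n - 2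
  · rw [show ℓ = ⟨n - 2, by omega⟩ from Fin.ext hl2]; exact hDD k hk'
  · have hl' : (ℓ : ℕ) < n - 2 := by have := ℓ.isLt; omega
    by_cases hk2 : (k : ℕ) = n - 2
    · rw [show k = ⟨n - 2, by omega⟩ from Fin.ext hk2]; exact hA ℓ hl'
    · exact h0 k ℓ (by omega) hl'

/-- Systematic property of `C_{G_4}`: for prime `n ≥ 5`, restricting a labeling of
`C_{G_4}` to the information edges `{(k,ℓ) : k,ℓ ∈ [n-2]}` is a bijection from `C_{G_4}`
onto `F_2^{(n-2)²}`: every assignment of values to the edges among the first `n-2`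
nodes extends to exactly one labeling in `C_{G_4}`. -/
theorem CG4_systematic (n : ℕ) (hn : 5 ≤ n) (hp : Nat.Prime n) :
    Set.BijOn
      (fun (L : Fin n → Fin n → ZMod 2) (k ℓ : Fin (n - 2)) =>
        L (Fin.castLE (by omega) k) (Fin.castLE (by omega) ℓ))
      (CG4 n hn) Set.univ := by
  classical
  have hinj : Set.InjOn
      (fun (L : Fin n → Fin n → ZMod 2) (k ℓ : Fin (n - 2)) =>
        L (Fin.castLE (by omega) k) (Fin.castLE (by omega) ℓ)) (CG4 n hn) := by
    intro L hL L' hL' hEq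
    have hsub := CG4_sub hL hL'
    have hz : L - L' = 0 := by
      apply CG4_zero_of_info_zero hn hsub
      intro k ℓ hk hl
      have := congrFun (congrFun hEq ⟨(k : ℕ), hk⟩) ⟨(ℓ : ℕ), hl⟩
      simp only [Pi.sub_apply]
      rw [sub_eq_zero]
      exact this
    exact sub_eq_zero.mp hz
  refine ⟨fun L _ => Set.mem_univ _, hinj, ?_⟩
  have himg :
      ((fun (L : Fin n → Fin n → ZMod 2) (k ℓ : Fin (n - 2)) =>
        L (Fin.castLE (by omega) k) (Fin.castLE (by omega) ℓ)) '' (CG4 n hn))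
        = Set.univ := by
    apply Set.eq_of_subset_of_ncard_le (Set.subset_univ _)
    rw [Set.ncard_image_of_injOn hinj, Set.ncard_univ]
    have hcard1 : (CG4 n hn).ncard = Nat.card (LinearMap.ker (CG4Phi n hn)) := by
      rw [CG4_eq_ker n hn, ← Nat.card_coe_set_eq]
      exact Nat.card_congr (Equiv.subtypeEquivRight fun x => Iff.rfl)
    haveI : Fintype (LinearMap.ker (CG4Phi n hn)) := Fintype.ofFinite _
    have hcard2 : Nat.card (LinearMap.ker (CG4Phi n hn)) =
        2 ^ Module.finrank (ZMod 2) (LinearMap.ker (CG4Phi n hn)) := by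
      rw [Nat.card_eq_fintype_card, Module.card_eq_pow_finrank (K := ZMod 2), ZMod.card]
    have hcard3 : Nat.card (Fin (n - 2) → Fin (n - 2) → ZMod 2) =
        2 ^ ((n - 2) * (n - 2)) := by
      rw [Nat.card_eq_fintype_card, Module.card_eq_pow_finrank (K := ZMod 2), ZMod.card]
      congr 1
      rw [Module.finrank_pi_fintype]
      simp [Module.finrank_pi]
    rw [hcard1, hcard2, hcard3]
    exact Nat.pow_le_pow_right (by norm_num) (CG4_finrank n hn)
  exact fun g _ => himg ▸ Set.mem_univ g
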